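/- Let n be a positive integer and let A_n be the n×n tridiagonal matrix with [A_n]_{k,k} = −k², [A_n]_{k,k−1} = k(k+n)/2, [A_n]_{k,k+1} = k(k−n)/2. Then A_n has n distinct negative eigenvalues, given by γ_{k,n} = k(k−1)/2 − n(n+1)/2 for 1 ≤ k ≤ n. In particular, A_n is invertible. -/

import Mathlib

open Finset Matrix

/-- The tridiagonal matrix `A_n` with `[A_n]_{k,k} = -k²`, `[A_n]_{k,k-1} = k(k+n)/2`,
`[A_n]_{k,k+1} = k(k-n)/2`, indices `1,…,n` realized on `Fin n` via `i ↦ i+1`. -/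
noncomputable def Amat (n : ℕ) : Matrix (Fin n) (Fin n) ℝ :=
  fun i j =>
    if (i : ℕ) = (j : ℕ) then -(((i : ℕ) + 1 : ℝ) ^ 2)
    else if (i : ℕ) = (j : ℕ) + 1 then (((i : ℕ) + 1 : ℝ) * (((i : ℕ) + 1) + n)) / 2
    else if (j : ℕ) = (i : ℕ) + 1 then (((i : ℕ) + 1 : ℝ) * (((i : ℕ) + 1 : ℝ) - n)) / 2
    else 0

/-- `γ_{k,n} = k(k-1)/2 - n(n+1)/2`. -/
noncomputable def gam (n k : ℕ) : ℝ := (k : ℝ) * ((k : ℝ) - 1) / 2 - (n : ℝ) * ((n : ℝ) + 1) / 2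

section AuxStmt8
open Polynomial

noncomputable def cseq (n m : ℕ) : ℕ → ℝ
  | 0 => 0
  | 1 => 1
  | (j+2) =>
      if j + 1 < n then
        ((2 * gam n m - ((j:ℝ)+1) * (((j:ℝ)+1) - 1 - 2*(n:ℝ))) /
          (((j:ℝ)+1) * (((j:ℝ)+1) - (n:ℝ)))) * cseq n m (j+1)
      else 0

lemma cseq_succ (n m j : ℕ) (hj : 1 ≤ j) :
    cseq n m (j+1) = if j < n then
      ((2 * gam n m - (j:ℝ) * ((j:ℝ) - 1 - 2*(n:ℝ))) /
        ((j:ℝ) * ((j:ℝ) - (n:ℝ)))) * cseq n m j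
    else 0 := by
  obtain ⟨t, rfl⟩ : ∃ t, j = t + 1 := ⟨j - 1, by omega⟩
  show cseq n m (t+2) = _
  rw [cseq]
  push_cast
  norm_num

lemma cseq_high (n m : ℕ) (hn : 1 ≤ n) (i : ℕ) (hi : n + 1 ≤ i) : cseq n m i = 0 := by
  obtain ⟨t, rfl⟩ : ∃ t, i = t + 1 := ⟨i - 1, by omega⟩
  rw [cseq_succ n m t (by omega), if_neg (by omega)]

lemma cseq_zero_of (n m : ℕ) (hm : 2 ≤ m) (hmn : m ≤ n) :
    ∀ j, n - m + 2 ≤ j → cseq n m j = 0 := by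
  intro j hj
  induction j, hj using Nat.le_induction with
  | base =>
      have h1 : (1:ℕ) ≤ n - m + 1 := by omega
      rw [show n - m + 2 = (n - m + 1) + 1 from rfl, cseq_succ n m _ h1]
      split_ifs with h
      · have hnum : (2 * gam n m - ((n - m + 1 : ℕ):ℝ) * (((n - m + 1 : ℕ):ℝ) - 1 - 2*(n:ℝ))) = 0 := by
          push_cast [Nat.cast_sub hmn]
          simp only [gam]
          ring
        rw [hnum, zero_div, zero_mul]
      · rfl
  | succ j hj' ih =>
      have hz := ih
      rw [cseq_succ n m j (by omega)]
      split_ifs with h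
      · rw [hz, mul_zero]
      · rfl

lemma Ezero (n m : ℕ) (hm1 : 1 ≤ m) (hmn : m ≤ n) (i : ℕ) :
    cseq n m (i+1) * ((i:ℝ) * ((i:ℝ)-(n:ℝ))/2)
      + cseq n m i * (-(gam n m) + ((i:ℝ)/2) * ((i:ℝ) - 1 - 2*(n:ℝ))) = 0 := by
  have hn : 1 ≤ n := le_trans hm1 hmn
  rcases Nat.lt_or_ge i 1 with hi0 | hi1
  · interval_cases i
    simp [cseq]
  rcases Nat.lt_or_ge i n with hilt | hige
  · rw [cseq_succ n m i hi1, if_pos hilt]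
    have h1 : (i:ℝ) ≠ 0 := by positivity
    have h2 : (i:ℝ) - (n:ℝ) ≠ 0 := by
      have : (i:ℝ) < (n:ℝ) := by exact_mod_cast hilt
      linarith
    field_simp
    ring
  rcases Nat.eq_or_lt_of_le hige with hieq | higt
  · subst hieq
    rw [cseq_succ n m n hn, if_neg (lt_irrefl _), zero_mul, zero_add]
    rcases Nat.eq_or_lt_of_le hm1 with hm1' | hm2
    · have hco : (-(gam n 1) + ((n:ℝ)/2) * ((n:ℝ) - 1 - 2*(n:ℝ))) = 0 := by
        simp only [gam]; push_cast; ring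
      rw [← hm1', hco, mul_zero]
    · rw [cseq_zero_of n m hm2 hmn n (by omega), zero_mul]
  · rw [cseq_high n m hn i (by omega), cseq_high n m hn (i+1) (by omega)]
    ring


lemma choose_real_1 (k j : ℕ) :
    ((j:ℝ)+1) * (k.choose (j+1) : ℝ) = ((k:ℝ) - (j:ℝ)) * (k.choose j : ℝ) := by
  rcases le_or_gt (j+1) k with h | h
  · have := Nat.choose_succ_right_eq k j
    have hc : ((k.choose (j+1) * (j+1) : ℕ) : ℝ) = ((k.choose j * (k - j) : ℕ) : ℝ) := by
      rw [this]
    push_cast [Nat.cast_sub (by omega : j ≤ k)] at hc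
    linarith
  · rcases Nat.eq_or_lt_of_le (by omega : k ≤ j) with h2 | h2
    · subst h2
      simp [Nat.choose_eq_zero_of_lt h]
    · simp [Nat.choose_eq_zero_of_lt h, Nat.choose_eq_zero_of_lt h2]

lemma choose_real_2 (k j : ℕ) :
    (k:ℝ) * ((k-1).choose j : ℝ) = ((j:ℝ)+1) * (k.choose (j+1) : ℝ) := by
  match k with
  | 0 => simp
  | (t+1) =>
    have := Nat.add_one_mul_choose_eq t j
    have hc : (((t+1) * t.choose j : ℕ) : ℝ) = (((t+1).choose (j+1) * (j+1) : ℕ) : ℝ) := by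
      rw [this]
    push_cast at hc ⊢
    simpa using by linarith

lemma bracket (n m k j : ℕ) :
    ((k:ℝ) * ((k:ℝ)+(n:ℝ))/2) * ((k-1).choose (j+1) : ℝ)
      - (((k:ℝ))^2 + gam n m) * (k.choose (j+1) : ℝ)
      + ((k:ℝ) * ((k:ℝ)-(n:ℝ))/2) * ((k+1).choose (j+1) : ℝ)
    = ((j:ℝ) * ((j:ℝ)-(n:ℝ))/2) * (k.choose j : ℝ)
      + (- gam n m + (((j:ℝ)+1)/2) * (((j:ℝ)+1) - 1 - 2*(n:ℝ))) * (k.choose (j+1) : ℝ) := by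
  have h2 := choose_real_2 k (j+1)
  have h1a := choose_real_1 k j
  have h1b := choose_real_1 k (j+1)
  have hp : ((k+1).choose (j+1) : ℝ) = (k.choose j : ℝ) + (k.choose (j+1) : ℝ) := by
    rw [Nat.choose_succ_succ]; push_cast; ring
  push_cast at h2 h1b
  rw [hp]
  linear_combination (((k:ℝ)+(n:ℝ))/2) * h2 + (((k:ℝ)+(n:ℝ))/2) * h1b
    - (((k:ℝ)+(j:ℝ)-(n:ℝ))/2) * h1a

noncomputable def vv (n m : ℕ) (k : ℕ) : ℝ :=
  ∑ j ∈ Finset.range (n+3), cseq n m j * (k.choose j : ℝ)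

lemma vv_zero (n m : ℕ) : vv n m 0 = 0 := by
  apply Finset.sum_eq_zero
  intro j _
  match j with
  | 0 => simp [cseq]
  | (t+1) => simp [Nat.choose]

lemma vv_one (n m : ℕ) : vv n m 1 = 1 := by
  rw [vv, Finset.sum_eq_single_of_mem 1 (by simp)]
  · simp [cseq]
  · intro j _ hj
    match j with
    | 0 => simp [cseq]
    | 1 => omega
    | (t+2) => simp [Nat.choose_eq_zero_of_lt]

lemma key (n m : ℕ) (hm1 : 1 ≤ m) (hmn : m ≤ n) (k : ℕ) :
    ((k:ℝ) * ((k:ℝ)+(n:ℝ))/2) * vv n m (k-1)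
      - (((k:ℝ))^2 + gam n m) * vv n m k
      + ((k:ℝ) * ((k:ℝ)-(n:ℝ))/2) * vv n m (k+1) = 0 := by
  have hn : 1 ≤ n := le_trans hm1 hmn
  set γ := gam n m with hγ
  -- the full sum expression
  have expand : ((k:ℝ) * ((k:ℝ)+(n:ℝ))/2) * vv n m (k-1)
      - (((k:ℝ))^2 + γ) * vv n m k
      + ((k:ℝ) * ((k:ℝ)-(n:ℝ))/2) * vv n m (k+1)
    = ∑ j ∈ Finset.range (n+3), cseq n m j *
        (((k:ℝ) * ((k:ℝ)+(n:ℝ))/2) * ((k-1).choose j : ℝ)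
          - (((k:ℝ))^2 + γ) * (k.choose j : ℝ)
          + ((k:ℝ) * ((k:ℝ)-(n:ℝ))/2) * ((k+1).choose j : ℝ)) := by
    simp only [vv, Finset.mul_sum, ← Finset.sum_sub_distrib, ← Finset.sum_add_distrib]
    apply Finset.sum_congr rfl
    intro j _
    ring
  rw [expand]
  rw [Finset.sum_range_succ' _ (n+2)]
  have hzero0 : cseq n m 0 * (((k:ℝ) * ((k:ℝ)+(n:ℝ))/2) * ((k-1).choose 0 : ℝ)
          - (((k:ℝ))^2 + γ) * (k.choose 0 : ℝ)
          + ((k:ℝ) * ((k:ℝ)-(n:ℝ))/2) * ((k+1).choose 0 : ℝ)) = 0 := by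
    simp [cseq]
  rw [hzero0, add_zero]
  have rebra : ∀ j ∈ Finset.range (n+2), cseq n m (j+1) *
        (((k:ℝ) * ((k:ℝ)+(n:ℝ))/2) * ((k-1).choose (j+1) : ℝ)
          - (((k:ℝ))^2 + γ) * (k.choose (j+1) : ℝ)
          + ((k:ℝ) * ((k:ℝ)-(n:ℝ))/2) * ((k+1).choose (j+1) : ℝ))
      = (cseq n m (j+1) * (((j:ℝ) * ((j:ℝ)-(n:ℝ))/2)) * (k.choose j : ℝ))
        + (cseq n m (j+1) * (- γ + ((((j:ℝ)+1))/2) * (((j:ℝ)+1) - 1 - 2*(n:ℝ))) * (k.choose (j+1) : ℝ)) := by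
    intro j _
    rw [bracket n m k j]
    ring
  rw [Finset.sum_congr rfl rebra, Finset.sum_add_distrib]
  -- second sum: shift index
  have hshift : (∑ j ∈ Finset.range (n+2),
        cseq n m (j+1) * (- γ + ((((j:ℝ)+1))/2) * (((j:ℝ)+1) - 1 - 2*(n:ℝ))) * (k.choose (j+1) : ℝ))
      = ∑ i ∈ Finset.range (n+3),
        cseq n m i * (- γ + (((i:ℝ))/2) * ((i:ℝ) - 1 - 2*(n:ℝ))) * (k.choose i : ℝ) := by
    rw [Finset.sum_range_succ' (fun i => cseq n m i * (- γ + (((i:ℝ))/2) * ((i:ℝ) - 1 - 2*(n:ℝ))) * (k.choose i : ℝ)) (n+2)]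
    have : cseq n m 0 * (- γ + (((0:ℕ):ℝ)/2) * (((0:ℕ):ℝ) - 1 - 2*(n:ℝ))) * ((k.choose 0 : ℕ) : ℝ) = 0 := by
      simp [cseq]
    rw [this, add_zero]
    apply Finset.sum_congr rfl
    intro j _
    push_cast
    ring
  rw [hshift]
  -- first sum: extend by one zero term
  have hext : (∑ j ∈ Finset.range (n+3),
        cseq n m (j+1) * (((j:ℝ) * ((j:ℝ)-(n:ℝ))/2)) * (k.choose j : ℝ))
      = ∑ j ∈ Finset.range (n+2),
        cseq n m (j+1) * (((j:ℝ) * ((j:ℝ)-(n:ℝ))/2)) * (k.choose j : ℝ) := by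
    rw [Finset.sum_range_succ, cseq_high n m hn (n+2+1) (by omega)]
    ring
  rw [← hext, ← Finset.sum_add_distrib]
  apply Finset.sum_eq_zero
  intro j _
  have := Ezero n m hm1 hmn j
  rw [hγ] at *
  nlinarith [this, sq_nonneg ((k.choose j : ℝ))]

lemma eigen (n m : ℕ) (hm1 : 1 ≤ m) (hmn : m ≤ n) :
    Amat n *ᵥ (fun i : Fin n => vv n m ((i:ℕ)+1))
      = gam n m • (fun i : Fin n => vv n m ((i:ℕ)+1)) := by
  funext i
  simp only [Matrix.mulVec, dotProduct, Pi.smul_apply, smul_eq_mul]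
  have split : ∀ j : Fin n, Amat n i j * vv n m ((j:ℕ)+1)
      = (if (j:ℕ) + 1 = (i:ℕ) then (((i:ℕ)+1:ℝ) * (((i:ℕ)+1:ℝ)+(n:ℝ))/2) * vv n m (i:ℕ) else 0)
      + (if (j:ℕ) = (i:ℕ) then -(((i:ℕ)+1:ℝ)^2) * vv n m ((i:ℕ)+1) else 0)
      + (if (j:ℕ) = (i:ℕ) + 1 then (((i:ℕ)+1:ℝ) * (((i:ℕ)+1:ℝ)-(n:ℝ))/2) * vv n m ((i:ℕ)+2) else 0) := by
    intro j
    unfold Amat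
    by_cases hA : (i:ℕ) = (j:ℕ)
    · rw [if_pos hA, if_neg (by omega : ¬((j:ℕ)+1 = (i:ℕ))), if_pos hA.symm,
        if_neg (by omega : ¬((j:ℕ) = (i:ℕ)+1)), show (j:ℕ)+1 = (i:ℕ)+1 from by omega]
      ring
    · by_cases hB : (i:ℕ) = (j:ℕ)+1
      · rw [if_neg hA, if_pos hB, if_pos hB.symm, if_neg (by omega : ¬((j:ℕ) = (i:ℕ))),
          if_neg (by omega : ¬((j:ℕ) = (i:ℕ)+1)), show (j:ℕ)+1 = (i:ℕ) from hB.symm]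
        ring
      · by_cases hC : (j:ℕ) = (i:ℕ)+1
        · rw [if_neg hA, if_neg hB, if_pos hC, if_neg (by omega : ¬((j:ℕ)+1 = (i:ℕ))),
            if_neg (by omega : ¬((j:ℕ) = (i:ℕ))), if_pos hC,
            show (j:ℕ)+1 = (i:ℕ)+2 from by omega]
          ring
        · rw [if_neg hA, if_neg hB, if_neg hC, if_neg (by omega : ¬((j:ℕ)+1 = (i:ℕ))),
            if_neg (by omega : ¬((j:ℕ) = (i:ℕ))), if_neg hC]
          ring
  rw [Finset.sum_congr rfl (fun j _ => split j), Finset.sum_add_distrib, Finset.sum_add_distrib]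
  have s2 : (∑ j : Fin n, if (j:ℕ) = (i:ℕ) then -(((i:ℕ)+1:ℝ)^2) * vv n m ((i:ℕ)+1) else 0)
      = -(((i:ℕ)+1:ℝ)^2) * vv n m ((i:ℕ)+1) := by
    rw [Finset.sum_eq_single_of_mem i (Finset.mem_univ _)
        (fun j _ hj => if_neg (fun hc => hj (Fin.val_inj.mp hc)))]
    exact if_pos rfl
  have s1 : (∑ j : Fin n, if (j:ℕ) + 1 = (i:ℕ) then
        (((i:ℕ)+1:ℝ) * (((i:ℕ)+1:ℝ)+(n:ℝ))/2) * vv n m (i:ℕ) else 0)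
      = (((i:ℕ)+1:ℝ) * (((i:ℕ)+1:ℝ)+(n:ℝ))/2) * vv n m (i:ℕ) := by
    rcases Nat.eq_zero_or_pos (i:ℕ) with hi | hi
    · rw [Finset.sum_eq_zero (fun j _ => by rw [if_neg (by omega)]), hi, vv_zero, mul_zero]
    · have hlt : (i:ℕ) - 1 < n := by omega
      rw [Finset.sum_eq_single_of_mem (⟨(i:ℕ)-1, hlt⟩ : Fin n) (Finset.mem_univ _)
          (fun j _ hj => if_neg (fun hc => hj (Fin.ext (by simp; omega))))]
      exact if_pos (by simp; omega)
  have s3 : (∑ j : Fin n, if (j:ℕ) = (i:ℕ) + 1 then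
        (((i:ℕ)+1:ℝ) * (((i:ℕ)+1:ℝ)-(n:ℝ))/2) * vv n m ((i:ℕ)+2) else 0)
      = (((i:ℕ)+1:ℝ) * (((i:ℕ)+1:ℝ)-(n:ℝ))/2) * vv n m ((i:ℕ)+2) := by
    rcases Nat.lt_or_ge ((i:ℕ)+1) n with hi | hi
    · rw [Finset.sum_eq_single_of_mem (⟨(i:ℕ)+1, hi⟩ : Fin n) (Finset.mem_univ _)
          (fun j _ hj => if_neg (fun hc => hj (Fin.ext (by simpa using hc))))]
      exact if_pos (by simp)
    · have hieq : (i:ℕ)+1 = n := by omega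
      rw [Finset.sum_eq_zero (fun j _ => by rw [if_neg (by omega)])]
      have hc : ((i:ℕ):ℝ)+1 = (n:ℝ) := by exact_mod_cast congrArg (Nat.cast : ℕ → ℝ) hieq
      rw [show ((((i:ℕ):ℝ)+1) * ((((i:ℕ):ℝ)+1)-(n:ℝ))/2) = 0 from by rw [hc]; ring]
      ring
  rw [s1, s2, s3]
  have hk := key n m hm1 hmn ((i:ℕ)+1)
  rw [show (i:ℕ)+1-1 = (i:ℕ) from rfl, show (i:ℕ)+1+1 = (i:ℕ)+2 from rfl] at hk
  push_cast at hk ⊢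
  linarith [hk]

lemma charpoly_eval (n : ℕ) (M : Matrix (Fin n) (Fin n) ℝ) (μ : ℝ) :
    M.charpoly.eval μ = (μ • (1 : Matrix (Fin n) (Fin n) ℝ) - M).det := by
  rw [Matrix.charpoly, eval_det, Matrix.matPolyEquiv_charmatrix]
  congr 1
  rw [Polynomial.eval_sub, Polynomial.eval_X, Polynomial.eval_C]
  congr 1
  rw [Matrix.scalar_apply, Matrix.smul_eq_diagonal_mul]
  simp

lemma spec_iff (n : ℕ) (μ : ℝ) :
    μ ∈ spectrum ℝ (Amat n) ↔ (Amat n).charpoly.eval μ = 0 := by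
  rw [spectrum.mem_iff, Algebra.algebraMap_eq_smul_one, charpoly_eval,
    Matrix.isUnit_iff_isUnit_det, isUnit_iff_ne_zero, not_not]

lemma gam_mem_spectrum (n m : ℕ) (hm1 : 1 ≤ m) (hmn : m ≤ n) :
    gam n m ∈ spectrum ℝ (Amat n) := by
  have hn : 0 < n := lt_of_lt_of_le hm1 hmn
  rw [spectrum.mem_iff, Algebra.algebraMap_eq_smul_one]
  intro hu
  set x : Fin n → ℝ := fun i : Fin n => vv n m ((i:ℕ)+1) with hx
  have hker : (gam n m • (1 : Matrix (Fin n) (Fin n) ℝ) - Amat n) *ᵥ x = 0 := by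
    rw [Matrix.sub_mulVec, Matrix.smul_mulVec, Matrix.one_mulVec, eigen n m hm1 hmn]
    exact sub_self _
  obtain ⟨u, hu'⟩ := hu
  have hx0 : x = 0 := by
    have h1 : (↑u⁻¹ : Matrix (Fin n) (Fin n) ℝ) *ᵥ ((↑u : Matrix (Fin n) (Fin n) ℝ) *ᵥ x) = x := by
      rw [Matrix.mulVec_mulVec, u.inv_mul, Matrix.one_mulVec]
    rw [hu', hker] at h1
    rw [← h1]
    simp [Matrix.mulVec_zero]
  have : x ⟨0, hn⟩ = 1 := by rw [hx]; exact vv_one n m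
  rw [hx0] at this
  simp at this

lemma gam_neg (n : ℕ) (hn : 0 < n) : ∀ k ∈ Set.Icc 1 n, gam n k < 0 := by
  intro k hk
  obtain ⟨hk1, hkn⟩ := hk
  have h1 : (1:ℝ) ≤ (k:ℝ) := by exact_mod_cast hk1
  have h2 : (k:ℝ) ≤ (n:ℝ) := by exact_mod_cast hkn
  simp only [gam]
  nlinarith

lemma gam_injOn (n : ℕ) : Set.InjOn (fun k : ℕ => gam n k) (Set.Icc 1 n) := by
  have hmono : StrictMonoOn (fun k : ℕ => gam n k) (Set.Icc 1 n) := by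
    intro a ha b hb hab
    have h1 : (1:ℝ) ≤ (a:ℝ) := by exact_mod_cast ha.1
    have h3 : (a:ℝ) + 1 ≤ (b:ℝ) := by exact_mod_cast hab
    simp only [gam]
    nlinarith
  exact hmono.injOn

lemma gam_injOn' (n : ℕ) : Set.InjOn (fun k : ℕ => gam n k) ↑(Finset.Icc 1 n) := by
  rw [Finset.coe_Icc]; exact gam_injOn n

lemma spectrum_eq (n : ℕ) (hn : 0 < n) :
    spectrum ℝ (Amat n) = (fun k : ℕ => gam n k) '' (Set.Icc 1 n) := by
  set P := (Amat n).charpoly with hP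
  have hPm : P.Monic := Matrix.charpoly_monic _
  have hPne : P ≠ 0 := hPm.ne_zero
  have hdeg : P.natDegree = n := by
    rw [hP, Matrix.charpoly_natDegree_eq_dim, Fintype.card_fin]
  set F : Finset ℝ := (Finset.Icc 1 n).image (fun k => gam n k) with hF
  have hFcard : F.card = n := by
    rw [hF, Finset.card_image_of_injOn (gam_injOn' n), Nat.card_Icc]
    omega
  have hFsub : F ⊆ P.roots.toFinset := by
    intro μ hμ
    rw [hF, Finset.mem_image] at hμ
    obtain ⟨k, hk, rfl⟩ := hμ
    rw [Multiset.mem_toFinset, Polynomial.mem_roots hPne]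
    have := gam_mem_spectrum n k (Finset.mem_Icc.mp hk).1 (Finset.mem_Icc.mp hk).2
    exact (spec_iff n _).mp this
  have hcard2 : P.roots.toFinset.card ≤ n := by
    calc P.roots.toFinset.card ≤ Multiset.card P.roots := Multiset.toFinset_card_le _
      _ ≤ P.natDegree := Polynomial.card_roots' P
      _ = n := hdeg
  have hFeq : F = P.roots.toFinset :=
    Finset.eq_of_subset_of_card_le hFsub (by rw [hFcard]; exact hcard2)
  have hcoe : ((F : Finset ℝ) : Set ℝ) = (fun k : ℕ => gam n k) '' (Set.Icc 1 n) := by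
    rw [hF, Finset.coe_image, Finset.coe_Icc]
  rw [← hcoe]
  ext μ
  rw [spec_iff n μ, Finset.mem_coe, hFeq, Multiset.mem_toFinset, Polynomial.mem_roots hPne]
  exact Iff.rfl

lemma amat_isUnit (n : ℕ) (hn : 0 < n) : IsUnit (Amat n) := by
  have h0 : (0:ℝ) ∉ spectrum ℝ (Amat n) := by
    rw [spectrum_eq n hn]
    rintro ⟨k, hk, hk0⟩
    have := gam_neg n hn k hk
    exact (ne_of_lt this) hk0
  rw [spectrum.notMem_iff, map_zero, zero_sub] at h0
  have := h0.neg
  rwa [neg_neg] at this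

end AuxStmt8

theorem stmt8 (n : ℕ) (hn : 0 < n) :
    spectrum ℝ (Amat n) = (fun k : ℕ => gam n k) '' (Set.Icc 1 n)
      ∧ (∀ k ∈ Set.Icc 1 n, gam n k < 0)
      ∧ Set.InjOn (fun k : ℕ => gam n k) (Set.Icc 1 n)
      ∧ IsUnit (Amat n) :=
  ⟨spectrum_eq n hn, gam_neg n hn, gam_injOn n, amat_isUnit n hn⟩
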